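/- arXiv:1106.1666 — 2 statements merged into one kernel-verified Lean document; each statement's English description precedes it below -/
import Mathlib

section
/- Let f = Σ_α f_α X^α be a form of degree 2d in ℝ[X_1,...,X_n], and let Δ be the set of exponents α (other than the 2d·e_i) such that f_α X^α is not a square, i.e., f_α < 0 or some α_i is odd. Suppose there exist nonnegative reals a_{α,i} (α ∈ Δ, 1 ≤ i ≤ n) such that (1) (2d)^{2d}·Π_i a_{α,i}^{α_i} = f_α^{2d}·Π_i α_i^{α_i} for all α ∈ Δ, and (2) f_{2d,i} ≥ Σ_{α∈Δ} a_{α,i} for each i, where f_{2d,i} is the coefficient of X_i^{2d} in f. Then f is a sum of squares. -/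
open MvPolynomial

open Finset
section
variable {R : Type*} [CommRing R]

lemma mysq (a : R) : IsSumSq (a * a) := by
  simpa using IsSumSq.sq_add a 0 IsSumSq.zero

lemma mysq' (a : R) : IsSumSq (a ^ 2) := by rw [sq]; exact mysq a

lemma IsSumSq.sq_mul {p : R} (q : R) (hp : IsSumSq p) : IsSumSq (q ^ 2 * p) := by
  induction hp with
  | zero => simpa using IsSumSq.zero
  | @sq_add a S pS ih =>
    have : q ^ 2 * (a * a + S) = (q * a) * (q * a) + q ^ 2 * S := by ring
    rw [this]; exact IsSumSq.sq_add _ ih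

lemma IsSumSq.nsmul' {p : R} (hp : IsSumSq p) (m : ℕ) : IsSumSq (m • p) := by
  induction m with
  | zero => simpa using IsSumSq.zero
  | succ k ih => rw [succ_nsmul]; exact ih.add hp

lemma IsSumSq.finsetSum {ι : Type*} (s : Finset ι) (f : ι → R) (h : ∀ i ∈ s, IsSumSq (f i)) :
    IsSumSq (∑ i ∈ s, f i) := by
  classical
  induction s using Finset.induction_on with
  | empty => simpa using IsSumSq.zero
  | insert x t hx ih =>
    rw [Finset.sum_insert hx]
    exact (h x (Finset.mem_insert_self x t)).add (ih fun i hi => h i (Finset.mem_insert_of_mem hi))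

lemma IsSumSq.map {S : Type*} [CommRing S] (h : R →+* S) {p : R} (hp : IsSumSq p) :
    IsSumSq (h p) := by
  induction hp with
  | zero => simpa using IsSumSq.zero
  | @sq_add a s pS ih => rw [map_add, map_mul]; exact IsSumSq.sq_add _ ih

noncomputable def Aaux (u v : R) (m : ℕ) : R :=
  ∑ j ∈ range m, ((j+1 : ℕ) : R) * (u ^ j * v ^ (m - 1 - j))

/-- the nonnegative-coefficient certificate polynomial -/
noncomputable def Rc (u v : R) (p q : ℕ) : R :=
  (∑ k ∈ range p, ((q*(k+1) : ℕ) : R) * (u ^ k * v ^ (p+q-2-k)))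
  + ∑ j ∈ range (q-1), ((p*(q-1-j) : ℕ) : R) * (u ^ (p+j) * v ^ (q-2-j))

lemma Rc_eq (u v : R) (p q' : ℕ) :
    ((q'+1 : ℕ) : R) * Aaux u v (p + q')
      = Rc u v p (q'+1) + ((p+q'+1 : ℕ) : R) * u ^ p * Aaux u v q' := by
  have hr : q'+1-1 = q' := rfl
  rw [Aaux, Finset.sum_range_add, Rc, Aaux, hr, mul_add, Finset.mul_sum, Finset.mul_sum]
  have h3 : ((p+q'+1 : ℕ) : R) * u ^ p * ∑ j ∈ range q', ((j+1:ℕ):R) * (u^j * v^(q'-1-j))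
      = ∑ j ∈ range q', ((p+q'+1:ℕ):R) * (((j+1:ℕ):R) * (u^(p+j) * v^(q'-1-j))) := by
    rw [Finset.mul_sum]
    refine Finset.sum_congr rfl fun j hj => ?_
    rw [pow_add]; ring
  rw [h3, add_assoc, ← Finset.sum_add_distrib]
  congr 1
  · refine Finset.sum_congr rfl fun k hk => ?_
    have : p+(q'+1)-2-k = p+q'-1-k := by omega
    rw [this]; push_cast; ring
  · refine Finset.sum_congr rfl fun j hj => ?_
    have hj' : j < q' := Finset.mem_range.mp hj
    have h1 : p+q'-1-(p+j) = q'-1-j := by omega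
    have h2 : (q'+1)-2-j = q'-1-j := by omega
    have hc : (q'+1)*(p+j+1) = p*(q'-j) + (p+q'+1)*(j+1) := by
      have h5 : q' - j + j = q' := by omega
      nlinarith [h5]
    have hcR : ((q'+1:ℕ):R) * ((p+j+1:ℕ):R)
        = ((p*(q'-j):ℕ):R) + ((p+q'+1:ℕ):R) * ((j+1:ℕ):R) := by
      rw [← Nat.cast_mul, hc]; push_cast; ring
    rw [h1, h2]
    calc ((q'+1:ℕ):R) * (((p+j+1:ℕ):R) * (u^(p+j) * v^(q'-1-j)))
        = (((q'+1:ℕ):R) * ((p+j+1:ℕ):R)) * (u^(p+j) * v^(q'-1-j)) := by ring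
      _ = ((((p*(q'-j):ℕ)):R) + ((p+q'+1:ℕ):R) * ((j+1:ℕ):R)) * (u^(p+j) * v^(q'-1-j)) := by
          rw [hcR]
      _ = _ := by rw [pow_add]; ring

lemma Aaux_succ (u v : R) (m : ℕ) :
    Aaux u v (m+1) = v * Aaux u v m + ((m+1 : ℕ) : R) * u ^ m := by
  rw [Aaux, Finset.sum_range_succ, Aaux, Finset.mul_sum]
  congr 1
  · refine Finset.sum_congr rfl fun j hj => ?_
    have hj' : j < m := Finset.mem_range.mp hj
    have h1 : m + 1 - 1 - j = (m - 1 - j) + 1 := by omega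
    rw [h1, pow_succ]
    ring
  · simp

lemma Ia (u v : R) (m : ℕ) :
    (u - v) ^ 2 * Aaux u v m
      = v ^ (m+1) + ((m : ℕ) : R) * u ^ (m+1) - ((m+1 : ℕ) : R) * (u ^ m * v) := by
  induction m with
  | zero => simp [Aaux]
  | succ k ih =>
    have h : (u - v) ^ 2 * Aaux u v (k+1)
        = v * ((u - v) ^ 2 * Aaux u v k) + ((k+1 : ℕ) : R) * u ^ k * (u - v) ^ 2 := by
      rw [Aaux_succ]; ring
    rw [h, ih]
    push_cast
    ring

lemma key2 (u v : R) (p q : ℕ) :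
    ((p:ℕ):R) * u^(p+q) + ((q:ℕ):R) * v^(p+q)
      = ((p+q :ℕ):R) * (u^p * v^q) + (u-v)^2 * Rc u v p q := by
  rcases Nat.eq_zero_or_pos q with hq | hq
  · subst hq
    have : Rc u v p 0 = 0 := by
      simp [Rc]
    simp [this]
  rcases Nat.eq_zero_or_pos p with hp | hp
  · subst hp
    obtain ⟨q', rfl⟩ : ∃ q', q = q'+1 := ⟨q-1, by omega⟩
    have : Rc u v 0 (q'+1) = 0 := by simp [Rc]
    simp [this]
  obtain ⟨q', rfl⟩ : ∃ q', q = q'+1 := ⟨q-1, by omega⟩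
  have hRc : (u-v)^2 * Rc u v p (q'+1)
      = ((q'+1 : ℕ) : R) * ((u-v)^2 * Aaux u v (p + q'))
        - ((p+q'+1 : ℕ) : R) * u ^ p * ((u-v)^2 * Aaux u v q') := by
    have := Rc_eq u v p q'
    have h2 : Rc u v p (q'+1) = ((q'+1 : ℕ) : R) * Aaux u v (p + q')
        - ((p+q'+1 : ℕ) : R) * u ^ p * Aaux u v q' := by rw [this]; ring
    rw [h2]; ring
  rw [hRc, Ia, Ia]
  have e1 : p + q' + 1 = p + (q'+1) := by omega
  have e2 : p + q' + 1 + 1 = p + (q'+1) + 1 := by omega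
  rw [e1]
  push_cast
  ring
lemma Rc_sos (w x z : R) (p q : ℕ) :
    IsSumSq (w^2 * ((x^2 - z^2)^2 * Rc (x^2) (z^2) p q)) := by
  have hsplit : w^2 * ((x^2 - z^2)^2 * Rc (x^2) (z^2) p q)
      = (∑ k ∈ range p, (q*(k+1)) • ((w*x^k*z^(p+q-2-k)*(x^2-z^2))^2))
        + ∑ j ∈ range (q-1), (p*(q-1-j)) • ((w*x^(p+j)*z^(q-2-j)*(x^2-z^2))^2) := by
    rw [Rc, mul_add, mul_add, Finset.mul_sum, Finset.mul_sum, Finset.mul_sum, Finset.mul_sum]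
    congr 1
    · refine Finset.sum_congr rfl fun k hk => ?_
      rw [nsmul_eq_mul]; push_cast; ring
    · refine Finset.sum_congr rfl fun j hj => ?_
      rw [nsmul_eq_mul]; push_cast; ring
  rw [hsplit]
  exact IsSumSq.add
    (IsSumSq.finsetSum _ _ fun k _ => (mysq' _).nsmul' _)
    (IsSumSq.finsetSum _ _ fun j _ => (mysq' _).nsmul' _)
end


open MvPolynomial


lemma evenCase {n d : ℕ} (β : Fin n → ℕ) (hβ : ∑ i, β i = d) :
    IsSumSq ((∑ i, ((β i : ℕ) : MvPolynomial (Fin n) ℝ) * X i ^ (2*d))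
      - ((d : ℕ) : MvPolynomial (Fin n) ℝ) * ∏ i, X i ^ (2 * β i)) := by
  classical
  generalize hm : (Finset.univ.filter (fun i => β i ≠ 0)).card = m
  induction m using Nat.strong_induction_on generalizing β with
  | _ m IH =>
  by_cases hcase : ∃ i j, i ≠ j ∧ β i ≠ 0 ∧ β j ≠ 0
  · obtain ⟨i, j, hij, hi, hj⟩ := hcase
    have hji' : j ∈ Finset.univ.erase i :=
      Finset.mem_erase.mpr ⟨Ne.symm hij, Finset.mem_univ j⟩
    set E := (Finset.univ.erase i).erase j with hE
    set e := β i + β j with he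
    obtain ⟨β', hβ'i, hβ'j, hβ'ne⟩ :
        ∃ γ : Fin n → ℕ, γ i = e ∧ γ j = 0 ∧ ∀ k, k ≠ i → k ≠ j → γ k = β k :=
      ⟨fun k => if k = i then e else if k = j then 0 else β k, by simp,
        by simp [Ne.symm hij], fun k h1 h2 => by simp [h1, h2]⟩
    obtain ⟨β'', hβ''j, hβ''i, hβ''ne⟩ :
        ∃ γ : Fin n → ℕ, γ j = e ∧ γ i = 0 ∧ ∀ k, k ≠ i → k ≠ j → γ k = β k :=
      ⟨fun k => if k = j then e else if k = i then 0 else β k, by simp,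
        by simp [hij], fun k h1 h2 => by simp [h1, h2]⟩
    have hmemE : ∀ k ∈ E, k ≠ i ∧ k ≠ j := by
      intro k hk
      rw [hE] at hk
      have h1 := Finset.mem_erase.mp hk
      have h2 := Finset.mem_erase.mp h1.2
      exact ⟨h2.1, h1.1⟩
    have hβ'E : ∀ k ∈ E, β' k = β k := fun k hk =>
      hβ'ne k (hmemE k hk).1 (hmemE k hk).2
    have hβ''E : ∀ k ∈ E, β'' k = β k := fun k hk =>
      hβ''ne k (hmemE k hk).1 (hmemE k hk).2
    -- splitting lemmas
    have splitP : ∀ γ : Fin n → ℕ, (∏ k, (X k : MvPolynomial (Fin n) ℝ) ^ (2 * γ k))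
        = X i ^ (2 * γ i) * (X j ^ (2 * γ j) * ∏ k ∈ E, X k ^ (2 * γ k)) := by
      intro γ
      rw [← Finset.mul_prod_erase Finset.univ _ (Finset.mem_univ i),
        ← Finset.mul_prod_erase _ _ hji']
    have splitS : ∀ γ : Fin n → ℕ, (∑ k, ((γ k : ℕ) : MvPolynomial (Fin n) ℝ) * X k ^ (2*d))
        = ((γ i : ℕ) : MvPolynomial (Fin n) ℝ) * X i ^ (2*d)
          + (((γ j : ℕ) : MvPolynomial (Fin n) ℝ) * X j ^ (2*d)
            + ∑ k ∈ E, ((γ k : ℕ) : MvPolynomial (Fin n) ℝ) * X k ^ (2*d)) := by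
      intro γ
      rw [← Finset.add_sum_erase Finset.univ _ (Finset.mem_univ i),
        ← Finset.add_sum_erase _ _ hji']
    have splitN : ∀ γ : Fin n → ℕ, (∑ k, γ k) = γ i + (γ j + ∑ k ∈ E, γ k) := by
      intro γ
      rw [← Finset.add_sum_erase Finset.univ _ (Finset.mem_univ i),
        ← Finset.add_sum_erase _ _ hji']
    -- sums of β', β''
    have hEs : ∑ k ∈ E, β' k = ∑ k ∈ E, β k := Finset.sum_congr rfl hβ'E
    have hEs' : ∑ k ∈ E, β'' k = ∑ k ∈ E, β k := Finset.sum_congr rfl hβ''E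
    have hsb := splitN β
    have hsb' := splitN β'
    have hsb'' := splitN β''
    rw [hβ'i, hβ'j, hEs] at hsb'
    rw [hβ''i, hβ''j, hEs'] at hsb''
    have hβ's : ∑ k, β' k = d := by omega
    have hβ''s : ∑ k, β'' k = d := by omega
    -- supports
    have he0 : e ≠ 0 := by omega
    have hfilt : ∀ (γ : Fin n → ℕ) (i₁ j₁ : Fin n), i₁ ≠ j₁ → β i₁ ≠ 0 → γ i₁ = e → γ j₁ = 0 →
        (∀ k, k ≠ i₁ → k ≠ j₁ → γ k = β k) →
        (Finset.univ.filter (fun k => γ k ≠ 0)) = (Finset.univ.filter (fun k => β k ≠ 0)).erase j₁ := by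
      intro γ i₁ j₁ hij₁ hne hγi hγj hγk
      ext k
      simp only [Finset.mem_filter, Finset.mem_erase, Finset.mem_univ, true_and]
      by_cases hk : k = i₁
      · subst hk
        rw [hγi]
        exact ⟨fun _ => ⟨hij₁, hne⟩, fun _ => he0⟩
      · by_cases hk2 : k = j₁
        · subst hk2; rw [hγj]; simp
        · rw [hγk k hk hk2]; tauto
    have hβ'filt := hfilt β' i j hij hi hβ'i hβ'j hβ'ne
    have hβ''filt := hfilt β'' j i (Ne.symm hij) hj hβ''j hβ''i
      (fun k hk1 hk2 => hβ''ne k hk2 hk1)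
    have hjmem : j ∈ Finset.univ.filter (fun k => β k ≠ 0) := by
      simp [Finset.mem_filter, hj]
    have himem : i ∈ Finset.univ.filter (fun k => β k ≠ 0) := by
      simp [Finset.mem_filter, hi]
    have hcard' : (Finset.univ.filter (fun k => β' k ≠ 0)).card < m := by
      rw [hβ'filt, Finset.card_erase_of_mem hjmem, hm]
      have : 0 < m := by rw [← hm]; exact Finset.card_pos.mpr ⟨j, hjmem⟩
      omega
    have hcard'' : (Finset.univ.filter (fun k => β'' k ≠ 0)).card < m := by
      rw [hβ''filt, Finset.card_erase_of_mem himem, hm]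
      have : 0 < m := by rw [← hm]; exact Finset.card_pos.mpr ⟨i, himem⟩
      omega
    have IH' := IH _ hcard' β' hβ's rfl
    have IH'' := IH _ hcard'' β'' hβ''s rfl
    -- main identity
    set W : MvPolynomial (Fin n) ℝ := ∏ k ∈ E, X k ^ (2 * β k) with hW
    have hWsq : W = (∏ k ∈ E, X k ^ (β k)) ^ 2 := by
      rw [hW, ← Finset.prod_pow]
      exact Finset.prod_congr rfl fun k _ => by rw [← pow_mul, mul_comm]
    have hkey := key2 (X i ^ 2 : MvPolynomial (Fin n) ℝ) (X j ^ 2) (β i) (β j)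
    have hmain : ((e : ℕ) : MvPolynomial (Fin n) ℝ) *
          ((∑ k, ((β k : ℕ) : MvPolynomial (Fin n) ℝ) * X k ^ (2*d))
            - ((d : ℕ) : MvPolynomial (Fin n) ℝ) * ∏ k, X k ^ (2 * β k))
        = ((β i : ℕ) : MvPolynomial (Fin n) ℝ) *
            ((∑ k, ((β' k : ℕ) : MvPolynomial (Fin n) ℝ) * X k ^ (2*d))
              - ((d : ℕ) : MvPolynomial (Fin n) ℝ) * ∏ k, X k ^ (2 * β' k))
          + ((β j : ℕ) : MvPolynomial (Fin n) ℝ) *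
            ((∑ k, ((β'' k : ℕ) : MvPolynomial (Fin n) ℝ) * X k ^ (2*d))
              - ((d : ℕ) : MvPolynomial (Fin n) ℝ) * ∏ k, X k ^ (2 * β'' k))
          + ((d : ℕ) : MvPolynomial (Fin n) ℝ) *
            (W * ((X i ^ 2 - X j ^ 2)^2 * Rc (X i ^ 2) (X j ^ 2) (β i) (β j))) := by
      have hsC' : (∑ k ∈ E, ((β' k : ℕ) : MvPolynomial (Fin n) ℝ) * X k ^ (2*d))
          = ∑ k ∈ E, ((β k : ℕ) : MvPolynomial (Fin n) ℝ) * X k ^ (2*d) :=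
        Finset.sum_congr rfl fun k hk => by rw [hβ'E k hk]
      have hsC'' : (∑ k ∈ E, ((β'' k : ℕ) : MvPolynomial (Fin n) ℝ) * X k ^ (2*d))
          = ∑ k ∈ E, ((β k : ℕ) : MvPolynomial (Fin n) ℝ) * X k ^ (2*d) :=
        Finset.sum_congr rfl fun k hk => by rw [hβ''E k hk]
      have hpC' : (∏ k ∈ E, (X k : MvPolynomial (Fin n) ℝ) ^ (2 * β' k))
          = ∏ k ∈ E, (X k : MvPolynomial (Fin n) ℝ) ^ (2 * β k) :=
        Finset.prod_congr rfl fun k hk => by rw [hβ'E k hk]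
      have hpC'' : (∏ k ∈ E, (X k : MvPolynomial (Fin n) ℝ) ^ (2 * β'' k))
          = ∏ k ∈ E, (X k : MvPolynomial (Fin n) ℝ) ^ (2 * β k) :=
        Finset.prod_congr rfl fun k hk => by rw [hβ''E k hk]
      rw [splitP β, splitP β', splitP β'', splitS β, splitS β', splitS β'',
        hβ'i, hβ'j, hβ''i, hβ''j, hsC', hsC'', hpC', hpC'', ← hW]
      have hpm : ∀ (k : Fin n) (t : ℕ), (X k : MvPolynomial (Fin n) ℝ) ^ (2 * t)
          = (X k ^ 2) ^ t := fun k t => by rw [pow_mul]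
      rw [hpm i (β i), hpm j (β j), hpm i e, hpm j e]
      push_cast [he] at hkey ⊢
      linear_combination ((d : ℕ) : MvPolynomial (Fin n) ℝ) * W * hkey
    -- SOS of the right-hand side
    have hsos : IsSumSq (((e : ℕ) : MvPolynomial (Fin n) ℝ) *
          ((∑ k, ((β k : ℕ) : MvPolynomial (Fin n) ℝ) * X k ^ (2*d))
            - ((d : ℕ) : MvPolynomial (Fin n) ℝ) * ∏ k, X k ^ (2 * β k))) := by
      rw [hmain]
      refine IsSumSq.add (IsSumSq.add ?_ ?_) ?_
      · rw [← nsmul_eq_mul]; exact IH'.nsmul' _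
      · rw [← nsmul_eq_mul]; exact IH''.nsmul' _
      · rw [← nsmul_eq_mul, hWsq]
        exact (Rc_sos _ _ _ _ _).nsmul' _
    -- divide by e
    have hre : (0:ℝ) < (e : ℝ) := by exact_mod_cast Nat.pos_of_ne_zero he0
    have hfin : ((∑ k, ((β k : ℕ) : MvPolynomial (Fin n) ℝ) * X k ^ (2*d))
          - ((d : ℕ) : MvPolynomial (Fin n) ℝ) * ∏ k, X k ^ (2 * β k))
        = (C (Real.sqrt ((e:ℝ)⁻¹)) : MvPolynomial (Fin n) ℝ) ^ 2 *
          (((e : ℕ) : MvPolynomial (Fin n) ℝ) *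
            ((∑ k, ((β k : ℕ) : MvPolynomial (Fin n) ℝ) * X k ^ (2*d))
              - ((d : ℕ) : MvPolynomial (Fin n) ℝ) * ∏ k, X k ^ (2 * β k))) := by
      have h1 : (C (Real.sqrt ((e:ℝ)⁻¹)) : MvPolynomial (Fin n) ℝ) ^ 2
          * ((e : ℕ) : MvPolynomial (Fin n) ℝ) = 1 := by
        rw [← map_pow, Real.sq_sqrt (by positivity), ← MvPolynomial.C_eq_coe_nat, ← map_mul,
          inv_mul_cancel₀ (ne_of_gt hre), map_one]
      rw [← mul_assoc, h1, one_mul]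
    rw [hfin]
    exact IsSumSq.sq_mul _ hsos
  · -- base case: at most one nonzero entry
    by_cases h0 : ∀ i, β i = 0
    · have hd : d = 0 := by rw [← hβ]; simp [h0]
      subst hd
      have : (∑ i, ((β i : ℕ) : MvPolynomial (Fin n) ℝ) * X i ^ (2*0)) = 0 := by
        simp [h0]
      rw [this]; simp [IsSumSq.zero]
    · push_neg at h0
      obtain ⟨i₀, hi₀⟩ := h0
      have hall : ∀ j, j ≠ i₀ → β j = 0 := by
        intro j hji
        by_contra hj
        exact hcase ⟨i₀, j, Ne.symm hji, hi₀, hj⟩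
      have hsum : β i₀ = d := by
        rw [← hβ, Finset.sum_eq_single i₀ (fun b _ hb => hall b hb) (by simp)]
      have hL : (∑ i, ((β i : ℕ) : MvPolynomial (Fin n) ℝ) * X i ^ (2*d))
          = ((d : ℕ) : MvPolynomial (Fin n) ℝ) * X i₀ ^ (2*d) := by
        rw [Finset.sum_eq_single i₀ (fun b _ hb => by simp [hall b hb]) (by simp), hsum]
      have hP : (∏ i, X i ^ (2 * β i)) = (X i₀ : MvPolynomial (Fin n) ℝ) ^ (2*d) := by
        rw [Finset.prod_eq_single i₀ (fun b _ hb => by simp [hall b hb]) (by simp), hsum]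
      rw [hL, hP, sub_self]
      exact IsSumSq.zero
lemma exists_le_sum {n : ℕ} (α : Fin n → ℕ) (m : ℕ) (hm : m ≤ ∑ i, α i) :
    ∃ β : Fin n → ℕ, (∀ i, β i ≤ α i) ∧ ∑ i, β i = m := by
  induction m with
  | zero => exact ⟨fun _ => 0, fun i => Nat.zero_le _, by simp⟩
  | succ k ih =>
    obtain ⟨β, hβle, hβs⟩ := ih (by omega)
    have hex : ∃ i, β i < α i := by
      by_contra h
      push_neg at h
      have : ∑ i, α i ≤ ∑ i, β i := Finset.sum_le_sum fun i _ => h i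
      omega
    obtain ⟨i, hi⟩ := hex
    refine ⟨Function.update β i (β i + 1), fun k => ?_, ?_⟩
    · rcases eq_or_ne k i with rfl | hk
      · rw [Function.update_self]; omega
      · rw [Function.update_of_ne hk]; exact hβle k
    · rw [Finset.sum_update_of_mem (Finset.mem_univ i), ← Finset.erase_eq]
      have h2 := Finset.add_sum_erase Finset.univ β (Finset.mem_univ i)
      omega

lemma hurwitz {n d : ℕ} (α : Fin n → ℕ) (hα : ∑ i, α i = 2*d) :
    IsSumSq ((∑ i, ((α i : ℕ) : MvPolynomial (Fin n) ℝ) * X i ^ (2*d))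
      - ((2*d : ℕ) : MvPolynomial (Fin n) ℝ) * ∏ i, X i ^ (α i)) := by
  obtain ⟨β, hβle, hβs⟩ := exists_le_sum α d (by omega)
  obtain ⟨γ, hγdef⟩ : ∃ γ : Fin n → ℕ, ∀ i, α i = β i + γ i :=
    ⟨fun i => α i - β i, fun i => by show α i = β i + (α i - β i); have := hβle i; omega⟩
  have hγs : ∑ i, γ i = d := by
    have h1 : ∑ i, α i = ∑ i, β i + ∑ i, γ i := by
      rw [← Finset.sum_add_distrib]
      exact Finset.sum_congr rfl fun i _ => hγdef i
    omega
  have h1 := evenCase β hβs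
  have h2 := evenCase γ hγs
  have hprod : (∏ i, (X i : MvPolynomial (Fin n) ℝ) ^ (α i))
      = (∏ i, (X i : MvPolynomial (Fin n) ℝ) ^ (β i)) * ∏ i, (X i : MvPolynomial (Fin n) ℝ) ^ (γ i) := by
    rw [← Finset.prod_mul_distrib]
    exact Finset.prod_congr rfl fun i _ => by rw [← pow_add, ← hγdef i]
  have hp2 : ∀ δ : Fin n → ℕ, (∏ i, (X i : MvPolynomial (Fin n) ℝ) ^ (2 * δ i))
      = (∏ i, (X i : MvPolynomial (Fin n) ℝ) ^ (δ i)) ^ 2 := by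
    intro δ
    rw [← Finset.prod_pow]
    exact Finset.prod_congr rfl fun k _ => by rw [← pow_mul, mul_comm]
  have hlin : (∑ i, ((α i : ℕ) : MvPolynomial (Fin n) ℝ) * X i ^ (2*d))
      = (∑ i, ((β i : ℕ) : MvPolynomial (Fin n) ℝ) * X i ^ (2*d))
        + ∑ i, ((γ i : ℕ) : MvPolynomial (Fin n) ℝ) * X i ^ (2*d) := by
    rw [← Finset.sum_add_distrib]
    refine Finset.sum_congr rfl fun i _ => ?_
    rw [hγdef i]
    push_cast
    ring
  have hid : (∑ i, ((α i : ℕ) : MvPolynomial (Fin n) ℝ) * X i ^ (2*d))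
        - ((2*d : ℕ) : MvPolynomial (Fin n) ℝ) * ∏ i, X i ^ (α i)
      = ((∑ i, ((β i : ℕ) : MvPolynomial (Fin n) ℝ) * X i ^ (2*d))
          - ((d : ℕ) : MvPolynomial (Fin n) ℝ) * ∏ i, X i ^ (2 * β i))
        + (((∑ i, ((γ i : ℕ) : MvPolynomial (Fin n) ℝ) * X i ^ (2*d))
          - ((d : ℕ) : MvPolynomial (Fin n) ℝ) * ∏ i, X i ^ (2 * γ i))
        + ((d : ℕ) : MvPolynomial (Fin n) ℝ) *
            ((∏ i, (X i : MvPolynomial (Fin n) ℝ) ^ (β i))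
              - ∏ i, (X i : MvPolynomial (Fin n) ℝ) ^ (γ i)) ^ 2) := by
    rw [hlin, hprod, hp2 β, hp2 γ]
    push_cast
    ring
  rw [hid]
  refine h1.add (h2.add ?_)
  rw [← nsmul_eq_mul]
  exact (mysq' _).nsmul' _
lemma isSumSq_C_mul {n : ℕ} {r : ℝ} (hr : 0 ≤ r) {p : MvPolynomial (Fin n) ℝ}
    (hp : IsSumSq p) : IsSumSq (C r * p) := by
  have h : (C r : MvPolynomial (Fin n) ℝ) = (C (Real.sqrt r)) ^ 2 := by
    rw [← map_pow, Real.sq_sqrt hr]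
  rw [h]
  exact IsSumSq.sq_mul _ hp

lemma isSumSq_C_mul_X_pow {n : ℕ} {r : ℝ} (hr : 0 ≤ r) (i : Fin n) (d : ℕ) :
    IsSumSq (C r * (X i : MvPolynomial (Fin n) ℝ) ^ (2*d)) := by
  have h : (X i : MvPolynomial (Fin n) ℝ) ^ (2*d) = (X i ^ d) ^ 2 := by
    rw [← pow_mul, mul_comm]
  rw [h]
  exact isSumSq_C_mul hr (mysq' _)

lemma diag_core {n d : ℕ} (hd : 1 ≤ d) (α : Fin n → ℕ) (hα : ∑ i, α i = 2*d)
    (a : Fin n → ℝ) (ha : ∀ i, 0 ≤ a i) (c : ℝ) (hc : c ≤ 0)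
    (heq : ((2*d : ℕ) : ℝ)^(2*d) * ∏ i, a i ^ (α i) = c^(2*d) * ∏ i, ((α i : ℝ)) ^ (α i)) :
    IsSumSq ((∑ i, (C (a i) : MvPolynomial (Fin n) ℝ) * X i ^ (2*d))
      + C c * ∏ i, X i ^ (α i)) := by
  rcases eq_or_lt_of_le hc with rfl | hneg
  · simp only [map_zero, zero_mul, add_zero]
    exact IsSumSq.finsetSum _ _ fun i _ => isSumSq_C_mul_X_pow (ha i) i d
  -- now c < 0
  have htwo : ((2*d : ℕ) : ℝ) ≠ 0 := by positivity
  have hαprodpos : (0:ℝ) < ∏ i, ((α i : ℝ)) ^ (α i) := by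
    apply Finset.prod_pos
    intro i _
    rcases Nat.eq_zero_or_pos (α i) with h | h
    · simp [h]
    · positivity
  have hcne : c ≠ 0 := ne_of_lt hneg
  have hcpow : (0:ℝ) < c^(2*d) := by
    have h2 : c^(2*d) = (c^d)^2 := by rw [← pow_mul, mul_comm]
    have h3 : c^(2*d) ≠ 0 := pow_ne_zero _ hcne
    rw [h2] at h3 ⊢
    exact lt_of_le_of_ne (sq_nonneg _) (Ne.symm h3)
  have hapos : ∀ i, α i ≠ 0 → 0 < a i := by
    intro i hi
    rcases lt_or_eq_of_le (ha i) with h | h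
    · exact h
    · exfalso
      have hz : (∏ k, a k ^ (α k)) = 0 :=
        Finset.prod_eq_zero (Finset.mem_univ i) (by rw [← h]; exact zero_pow hi)
      rw [hz, mul_zero] at heq
      nlinarith
  obtain ⟨t, ht0, htpow⟩ : ∃ t : Fin n → ℝ, (∀ i, 0 ≤ t i) ∧
      (∀ i, α i ≠ 0 → (t i)^(2*d) = 2*(d:ℝ) * a i / (α i : ℝ)) := by
    refine ⟨fun i => if α i = 0 then 0 else
      (2*(d:ℝ) * a i / (α i : ℝ)) ^ (((2*d : ℕ) : ℝ)⁻¹), fun i => ?_, fun i hi => ?_⟩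
    · dsimp only
      split
      · exact le_refl 0
      · rename_i h
        have hαi : (0:ℝ) < (α i : ℝ) := by
          exact_mod_cast Nat.pos_of_ne_zero h
        have : (0:ℝ) ≤ 2*(d:ℝ) * a i / (α i : ℝ) :=
          div_nonneg (mul_nonneg (by positivity) (ha i)) hαi.le
        exact Real.rpow_nonneg this _
    · dsimp only
      rw [if_neg hi]
      have hαi : (0:ℝ) < (α i : ℝ) := by exact_mod_cast Nat.pos_of_ne_zero hi
      have hnn : (0:ℝ) ≤ 2*(d:ℝ) * a i / (α i : ℝ) :=
        div_nonneg (mul_nonneg (by positivity) (ha i)) hαi.le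
      exact Real.rpow_inv_natCast_pow hnn (by omega)
  -- the product of t i ^ α i equals -c
  have hprod_t : (∏ i, t i ^ (α i)) = -c := by
    have hstep : (∏ i, (t i ^ (2*d)) ^ (α i)) * ∏ i, ((α i : ℝ)) ^ (α i)
        = ((2*d : ℕ) : ℝ)^(2*d) * ∏ i, a i ^ (α i) := by
      rw [← Finset.prod_mul_distrib]
      have hc2 : ((2*d : ℕ) : ℝ)^(2*d) = ∏ i, (2*(d:ℝ))^(α i) := by
        rw [Finset.prod_pow_eq_pow_sum, hα]
        push_cast
        ring
      rw [hc2, ← Finset.prod_mul_distrib]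
      refine Finset.prod_congr rfl fun i _ => ?_
      rcases Nat.eq_zero_or_pos (α i) with h | h
      · simp [h]
      · have hne : α i ≠ 0 := by omega
        have hx : (0:ℝ) < (α i : ℝ) := by exact_mod_cast Nat.pos_of_ne_zero hne
        rw [htpow i hne, div_pow, div_mul_cancel₀, mul_pow]
        exact pow_ne_zero _ hx.ne'
    have hc2 : (∏ i, (t i ^ (2*d)) ^ (α i)) = c^(2*d) := by
      have := heq
      rw [← hstep] at this
      exact mul_right_cancel₀ (ne_of_gt hαprodpos) this
    have hswap : (∏ i, t i ^ (α i))^(2*d) = ∏ i, (t i ^ (2*d)) ^ (α i) := by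
      rw [← Finset.prod_pow]
      refine Finset.prod_congr rfl fun i _ => ?_
      rw [← pow_mul, ← pow_mul, mul_comm (α i) (2*d)]
    have h1 : (∏ i, t i ^ (α i))^(2*d) = (-c)^(2*d) := by
      rw [hswap, hc2]
      have : Even (2*d) := even_two_mul d
      exact (this.neg_pow c).symm
    have h2 : (0:ℝ) ≤ ∏ i, t i ^ (α i) :=
      Finset.prod_nonneg fun i _ => pow_nonneg (ht0 i) _
    have h3 : (0:ℝ) ≤ -c := by linarith
    exact (pow_left_inj₀ h2 h3 (by omega)).mp h1
  -- apply the substitution X i ↦ t i • X i to the Hurwitz form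
  set φ : MvPolynomial (Fin n) ℝ →+* MvPolynomial (Fin n) ℝ :=
    (aeval (fun i => C (t i) * X i : Fin n → MvPolynomial (Fin n) ℝ)).toRingHom with hφdef
  have hH := (hurwitz α hα).map φ
  have hφX : ∀ (i : Fin n) (k : ℕ), φ ((X i : MvPolynomial (Fin n) ℝ) ^ k)
      = C (t i ^ k) * X i ^ k := by
    intro i k
    rw [hφdef]
    simp [mul_pow, map_pow]
  have hφH : φ ((∑ i, ((α i : ℕ) : MvPolynomial (Fin n) ℝ) * X i ^ (2*d))
        - ((2*d : ℕ) : MvPolynomial (Fin n) ℝ) * ∏ i, X i ^ (α i))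
      = (∑ i, C ((α i : ℝ) * t i ^ (2*d)) * X i ^ (2*d))
        + C (2*(d:ℝ) * c) * ∏ i, X i ^ (α i) := by
    rw [map_sub, map_sum, map_mul]
    have h1 : ∀ i ∈ Finset.univ, φ (((α i : ℕ) : MvPolynomial (Fin n) ℝ) * X i ^ (2*d))
        = C ((α i : ℝ) * t i ^ (2*d)) * X i ^ (2*d) := by
      intro i _
      rw [map_mul, map_natCast, hφX, ← MvPolynomial.C_eq_coe_nat, ← mul_assoc, ← map_mul]
    rw [Finset.sum_congr rfl h1, map_prod]
    have h2 : (∏ i, φ ((X i : MvPolynomial (Fin n) ℝ) ^ (α i)))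
        = C (-c) * ∏ i, (X i : MvPolynomial (Fin n) ℝ) ^ (α i) := by
      rw [Finset.prod_congr rfl (fun i _ => hφX i (α i)), Finset.prod_mul_distrib,
        ← map_prod, hprod_t]
    rw [h2, map_natCast, ← MvPolynomial.C_eq_coe_nat, ← mul_assoc, ← map_mul]
    have : ((2*d : ℕ) : ℝ) * -c = -(2*(d:ℝ) * c) := by push_cast; ring
    rw [this, map_neg, sub_eq_add_neg, neg_mul, neg_neg]
  rw [hφH] at hH
  -- express the target
  have htarget : (∑ i, (C (a i) : MvPolynomial (Fin n) ℝ) * X i ^ (2*d))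
        + C c * ∏ i, X i ^ (α i)
      = C (((2*d : ℕ) : ℝ)⁻¹) * ((∑ i, C ((α i : ℝ) * t i ^ (2*d)) * X i ^ (2*d))
          + C (2*(d:ℝ) * c) * ∏ i, X i ^ (α i))
        + ∑ i, (C (if α i = 0 then a i else 0) : MvPolynomial (Fin n) ℝ) * X i ^ (2*d) := by
    rw [mul_add, Finset.mul_sum, add_right_comm, ← Finset.sum_add_distrib]
    congr 1
    · refine Finset.sum_congr rfl fun i _ => ?_
      rw [← mul_assoc, ← map_mul, ← add_mul, ← map_add]
      congr 2
      rcases Nat.eq_zero_or_pos (α i) with h | h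
      · simp [h]
      · have hne : α i ≠ 0 := by omega
        have hαi : ((α i : ℝ)) ≠ 0 := by
          exact_mod_cast Nat.pos_of_ne_zero hne |>.ne'
        rw [htpow i hne, if_neg hne, add_zero]
        push_cast
        field_simp
    · rw [← mul_assoc, ← map_mul]
      congr 2
      push_cast
      field_simp
  rw [htarget]
  refine IsSumSq.add (isSumSq_C_mul (by positivity) hH)
    (IsSumSq.finsetSum _ _ fun i _ => ?_)
  have : (0:ℝ) ≤ if α i = 0 then a i else 0 := by
    split
    · exact ha i
    · exact le_refl 0
  exact isSumSq_C_mul_X_pow this i d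
lemma diag {n d : ℕ} (hd : 1 ≤ d) (α : Fin n → ℕ) (hα : ∑ i, α i = 2*d)
    (a : Fin n → ℝ) (ha : ∀ i, 0 ≤ a i) (c : ℝ)
    (heq : ((2*d : ℕ) : ℝ)^(2*d) * ∏ i, a i ^ (α i) = c^(2*d) * ∏ i, ((α i : ℝ)) ^ (α i)) :
    IsSumSq ((∑ i, (C (a i) : MvPolynomial (Fin n) ℝ) * X i ^ (2*d))
      + C c * ∏ i, X i ^ (α i)) := by
  rcases le_or_gt c 0 with hc | hc
  · exact diag_core hd α hα a ha c hc heq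
  by_cases hodd : ∃ i, Odd (α i)
  · obtain ⟨i₀, hi₀⟩ := hodd
    have heq' : ((2*d : ℕ) : ℝ)^(2*d) * ∏ i, a i ^ (α i)
        = (-c)^(2*d) * ∏ i, ((α i : ℝ)) ^ (α i) := by
      rw [(even_two_mul d).neg_pow]
      exact heq
    have hcore := diag_core hd α hα a ha (-c) (by linarith) heq'
    set ψ : MvPolynomial (Fin n) ℝ →+* MvPolynomial (Fin n) ℝ :=
      (aeval (fun k : Fin n => if k = i₀ then (-(X k)) else X k)).toRingHom with hψdef
    have hψX : ∀ (i : Fin n) (k : ℕ), ψ ((X i : MvPolynomial (Fin n) ℝ) ^ k)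
        = (if i = i₀ then (-(X i : MvPolynomial (Fin n) ℝ)) else X i) ^ k := by
      intro i k
      rw [hψdef]
      simp [map_pow]
    have hψ : ψ ((∑ i, (C (a i) : MvPolynomial (Fin n) ℝ) * X i ^ (2*d))
          + C (-c) * ∏ i, X i ^ (α i))
        = (∑ i, (C (a i) : MvPolynomial (Fin n) ℝ) * X i ^ (2*d))
          + C c * ∏ i, X i ^ (α i) := by
      rw [map_add, map_sum, map_mul, map_prod]
      have h1 : ∀ i ∈ Finset.univ, ψ ((C (a i) : MvPolynomial (Fin n) ℝ) * X i ^ (2*d))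
          = C (a i) * X i ^ (2*d) := by
        intro i _
        rw [map_mul, hψX]
        have hC : ψ (C (a i)) = C (a i) := by
          rw [hψdef]; simp
        rw [hC]
        congr 1
        split
        · exact (even_two_mul d).neg_pow _
        · rfl
      rw [Finset.sum_congr rfl h1]
      have h2 : (∏ i, ψ ((X i : MvPolynomial (Fin n) ℝ) ^ (α i)))
          = -(∏ i, (X i : MvPolynomial (Fin n) ℝ) ^ (α i)) := by
        rw [Finset.prod_congr rfl (fun i _ => hψX i (α i)),
          ← Finset.mul_prod_erase Finset.univ _ (Finset.mem_univ i₀), if_pos rfl,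
          hi₀.neg_pow]
        have h3 : (∏ i ∈ Finset.univ.erase i₀,
              (if i = i₀ then -(X i : MvPolynomial (Fin n) ℝ) else X i) ^ (α i))
            = ∏ i ∈ Finset.univ.erase i₀, (X i : MvPolynomial (Fin n) ℝ) ^ (α i) :=
          Finset.prod_congr rfl fun i hi => by rw [if_neg (Finset.mem_erase.mp hi).1]
        rw [h3, neg_mul, Finset.mul_prod_erase Finset.univ
          (fun i => (X i : MvPolynomial (Fin n) ℝ) ^ (α i)) (Finset.mem_univ i₀)]
      have hCc : ψ (C (-c)) = C (-c) := by rw [hψdef]; simp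
      rw [h2, hCc, map_neg, neg_mul_neg]
    exact hψ ▸ hcore.map ψ
  · push_neg at hodd
    obtain ⟨m, hm⟩ : ∃ m : Fin n → ℕ, ∀ i, α i = 2 * m i :=
      ⟨fun i => α i / 2, fun i => by
        show α i = 2 * (α i / 2)
        have h2 := Nat.even_iff.mp (Nat.not_odd_iff_even.mp (hodd i))
        omega⟩
    have hprodsq : (∏ i, (X i : MvPolynomial (Fin n) ℝ) ^ (α i))
        = (∏ i, (X i : MvPolynomial (Fin n) ℝ) ^ (m i)) ^ 2 := by
      rw [← Finset.prod_pow]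
      refine Finset.prod_congr rfl fun i _ => ?_
      rw [← pow_mul, mul_comm (m i) 2, ← hm i]
    rw [hprodsq]
    exact IsSumSq.add
      (IsSumSq.finsetSum _ _ fun i _ => isSumSq_C_mul_X_pow (ha i) i d)
      (isSumSq_C_mul hc.le (mysq' _))
/-- Main sufficient SOS condition (Theorem 2.3 / `SuffCnd`): let `f` be a form of
degree `2d` and let `Δ` consist of those exponents `α` of `f` (other than the
`2d·e_i`) for which `f_α X^α` is not a square.  If there are nonnegative reals
`a_{α,i}` with `(2d)^{2d}·Π a_{α,i}^{α_i} = f_α^{2d}·Π α_i^{α_i}` for all `α ∈ Δ`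
and `f_{2d,i} ≥ Σ_{α∈Δ} a_{α,i}` for all `i`, then `f` is a sum of squares. -/
theorem suffCnd_sos {n d : ℕ} (hd : 1 ≤ d) (f : MvPolynomial (Fin n) ℝ)
    (hf : f.IsHomogeneous (2 * d)) (Δ : Finset (Fin n →₀ ℕ))
    (hΔ : ∀ α, α ∈ Δ ↔ α ∈ f.support ∧ (¬ ∃ i, α = Finsupp.single i (2 * d)) ∧
      (f.coeff α < 0 ∨ ∃ i, Odd (α i)))
    (a : (Fin n →₀ ℕ) → Fin n → ℝ) (ha : ∀ α ∈ Δ, ∀ i, 0 ≤ a α i)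
    (h1 : ∀ α ∈ Δ, ((2 * d : ℕ) : ℝ) ^ (2 * d) * ∏ i, (a α i) ^ (α i)
      = (f.coeff α) ^ (2 * d) * ∏ i, (α i : ℝ) ^ (α i))
    (h2 : ∀ i, ∑ α ∈ Δ, a α i ≤ f.coeff (Finsupp.single i (2 * d))) :
    IsSumSq f := by
  classical
  set V : Finset (Fin n →₀ ℕ) :=
    f.support.filter (fun α => ∃ i, α = Finsupp.single i (2*d)) with hVdef
  set S : Finset (Fin n →₀ ℕ) := f.support \ (V ∪ Δ) with hSdef
  have hΔsub : Δ ⊆ f.support := fun α hα => ((hΔ α).mp hα).1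
  have hVsub : V ⊆ f.support := Finset.filter_subset _ _
  have hdisj : Disjoint V Δ := by
    rw [Finset.disjoint_left]
    intro α hαV hαΔ
    exact ((hΔ α).mp hαΔ).2.1 ((Finset.mem_filter.mp hαV).2)
  have hsub : V ∪ Δ ⊆ f.support := Finset.union_subset hVsub hΔsub
  have hdeg : ∀ α ∈ f.support, ∑ i, α i = 2*d := by
    intro α hα
    have h := hf (MvPolynomial.mem_support_iff.mp hα)
    rw [← h]
    simp [Finsupp.weight_apply, Finsupp.sum_fintype]
  have hmon : ∀ (α : Fin n →₀ ℕ) (r : ℝ),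
      (monomial α r : MvPolynomial (Fin n) ℝ) = C r * ∏ i, (X i : MvPolynomial (Fin n) ℝ) ^ (α i) := by
    intro α r
    rw [monomial_eq]
    congr 1
    exact Finsupp.prod_fintype _ _ fun i => pow_zero _
  have hXsingle : ∀ i : Fin n,
      (∏ j, (X j : MvPolynomial (Fin n) ℝ) ^ ((Finsupp.single i (2*d)) j)) = X i ^ (2*d) := by
    intro i
    rw [Finset.prod_eq_single i]
    · rw [Finsupp.single_eq_same]
    · intro j _ hj
      rw [Finsupp.single_eq_of_ne' (Ne.symm hj), pow_zero]
    · simp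
  -- the V part
  have hV : (∑ α ∈ V, (monomial α (coeff α f) : MvPolynomial (Fin n) ℝ))
      = ∑ i, C (coeff (Finsupp.single i (2*d)) f) * X i ^ (2*d) := by
    have himg : V ⊆ Finset.image (fun i => Finsupp.single i (2*d)) Finset.univ := by
      intro α hα
      obtain ⟨i, hi⟩ := (Finset.mem_filter.mp hα).2
      exact Finset.mem_image.mpr ⟨i, Finset.mem_univ i, hi.symm⟩
    rw [Finset.sum_subset himg ?_]
    · rw [Finset.sum_image ?_]
      · refine Finset.sum_congr rfl fun i _ => ?_
        rw [hmon, hXsingle]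
      · intro i _ j _ hij
        exact Finsupp.single_left_injective (by omega) hij
    · intro α hα hnV
      obtain ⟨i, _, hi⟩ := Finset.mem_image.mp hα
      by_cases hs : α ∈ f.support
      · exact absurd (Finset.mem_filter.mpr ⟨hs, ⟨i, hi.symm⟩⟩) hnV
      · rw [MvPolynomial.notMem_support_iff.mp hs, map_zero]
  -- rewrite monomials on Δ
  have hmonΔ : (∑ α ∈ Δ, (monomial α (coeff α f) : MvPolynomial (Fin n) ℝ))
      = ∑ α ∈ Δ, C (coeff α f) * ∏ i, (X i : MvPolynomial (Fin n) ℝ) ^ (α i) :=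
    Finset.sum_congr rfl fun α _ => hmon α _
  -- the decomposition of f
  have hfeq : f = (∑ α ∈ S, (monomial α (coeff α f) : MvPolynomial (Fin n) ℝ))
      + ((∑ i, C (coeff (Finsupp.single i (2*d)) f - ∑ α ∈ Δ, a α i) * X i ^ (2*d))
        + ∑ α ∈ Δ, ((∑ i, C (a α i) * X i ^ (2*d))
            + C (coeff α f) * ∏ i, (X i : MvPolynomial (Fin n) ℝ) ^ (α i))) := by
    have hstep : (∑ i, (C (coeff (Finsupp.single i (2*d)) f
            - ∑ α ∈ Δ, a α i) : MvPolynomial (Fin n) ℝ) * X i ^ (2*d))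
          + ∑ i, (C (∑ α ∈ Δ, a α i) : MvPolynomial (Fin n) ℝ) * X i ^ (2*d)
        = ∑ i, C (coeff (Finsupp.single i (2*d)) f) * X i ^ (2*d) := by
      rw [← Finset.sum_add_distrib]
      refine Finset.sum_congr rfl fun i _ => ?_
      rw [← add_mul, ← map_add, sub_add_cancel]
    have hswap : (∑ α ∈ Δ, ∑ i, (C (a α i) : MvPolynomial (Fin n) ℝ) * X i ^ (2*d))
        = ∑ i, (C (∑ α ∈ Δ, a α i) : MvPolynomial (Fin n) ℝ) * X i ^ (2*d) := by
      rw [Finset.sum_comm]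
      refine Finset.sum_congr rfl fun i _ => ?_
      rw [← Finset.sum_mul, ← map_sum]
    calc f = ∑ α ∈ f.support, (monomial α (coeff α f) : MvPolynomial (Fin n) ℝ) :=
            (support_sum_monomial_coeff f).symm
      _ = (∑ α ∈ S, (monomial α (coeff α f) : MvPolynomial (Fin n) ℝ))
            + ∑ α ∈ V ∪ Δ, (monomial α (coeff α f) : MvPolynomial (Fin n) ℝ) := by
            rw [hSdef, Finset.sum_sdiff hsub]
      _ = (∑ α ∈ S, (monomial α (coeff α f) : MvPolynomial (Fin n) ℝ))
            + ((∑ i, C (coeff (Finsupp.single i (2*d)) f) * X i ^ (2*d))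
              + ∑ α ∈ Δ, C (coeff α f) * ∏ i, (X i : MvPolynomial (Fin n) ℝ) ^ (α i)) := by
            rw [Finset.sum_union hdisj, hV, hmonΔ]
      _ = _ := by
            rw [← hstep, ← hswap, Finset.sum_add_distrib]
            ring
  rw [hfeq]
  refine IsSumSq.add (IsSumSq.finsetSum _ _ fun α hα => ?_)
    (IsSumSq.add (IsSumSq.finsetSum _ _ fun i _ => ?_) (IsSumSq.finsetSum _ _ fun α hα => ?_))
  · -- S part : squares
    have hαs : α ∈ f.support := (Finset.mem_sdiff.mp hα).1
    have hαn := (Finset.mem_sdiff.mp hα).2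
    have hnΔ : α ∉ Δ := fun h => hαn (Finset.mem_union_right _ h)
    have hnV : α ∉ V := fun h => hαn (Finset.mem_union_left _ h)
    have hnsingle : ¬ ∃ i, α = Finsupp.single i (2*d) := fun h =>
      hnV (Finset.mem_filter.mpr ⟨hαs, h⟩)
    have hgood : ¬ (coeff α f < 0 ∨ ∃ i, Odd (α i)) := fun h =>
      hnΔ ((hΔ α).mpr ⟨hαs, hnsingle, h⟩)
    push_neg at hgood
    obtain ⟨hcoeff, heven⟩ := hgood
    obtain ⟨m, hm⟩ : ∃ m : Fin n → ℕ, ∀ i, α i = 2 * (m i) :=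
      ⟨fun i => α i / 2, fun i => by
        show α i = 2 * (α i / 2)
        have h2 := Nat.even_iff.mp (Nat.not_odd_iff_even.mp (heven i))
        omega⟩
    rw [hmon]
    have hsq : (∏ i, (X i : MvPolynomial (Fin n) ℝ) ^ (α i))
        = (∏ i, (X i : MvPolynomial (Fin n) ℝ) ^ (m i)) ^ 2 := by
      rw [← Finset.prod_pow]
      refine Finset.prod_congr rfl fun i _ => ?_
      rw [← pow_mul, mul_comm (m i) 2, ← hm i]
    rw [hsq]
    exact isSumSq_C_mul hcoeff (mysq' _)
  · -- diagonal remainder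
    have hnn : 0 ≤ coeff (Finsupp.single i (2*d)) f - ∑ α ∈ Δ, a α i :=
      sub_nonneg.mpr (h2 i)
    exact isSumSq_C_mul_X_pow hnn i d
  · -- Δ part : diag lemma
    exact diag hd (fun i => α i) (hdeg α (hΔsub hα)) (a α) (ha α hα) (coeff α f) (h1 α hα)
end

section
/- Let f ∈ ℝ[X_1,...,X_n] have degree 2d, with constant term f_0, coefficient f_{2d,i} of X_i^{2d}, and let Δ be the set of exponents α ∉ {0, 2d·e_1,...,2d·e_n} with f_α ≠ 0 such that f_α X^α is not a square. If f_0 ≥ Σ_{α∈Δ} |f_α|·(2d−|α|)/(2d) and f_{2d,i} ≥ Σ_{α∈Δ} |f_α|·α_i/(2d) for each i = 1,...,n, then f is a sum of squares. -/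
open MvPolynomial

theorem sos_zero {R : Type*} [CommSemiring R] : IsSumSq (0 : R) := IsSumSq.zero

theorem sos_sq_mul {R : Type*} [CommSemiring R] (x : R) {S : R} (h : IsSumSq S) :
    IsSumSq (x * x * S) := by
  induction h with
  | zero => simpa using IsSumSq.zero
  | @sq_add a S pS ih =>
    have : x * x * (a * a + S) = (x * a) * (x * a) + x * x * S := by ring
    rw [this]; exact IsSumSq.sq_add _ ih

theorem sos_mul_self {R : Type*} [CommSemiring R] (x : R) : IsSumSq (x * x) := by
  simpa using IsSumSq.sq_add x 0 IsSumSq.zero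

theorem sos_map {R S : Type*} [CommSemiring R] [CommSemiring S] (g : R →+* S) {a : R}
    (h : IsSumSq a) : IsSumSq (g a) := by
  induction h with
  | zero => simpa using IsSumSq.zero
  | @sq_add x T pT ih =>
    rw [map_add, map_mul]; exact IsSumSq.sq_add _ ih

theorem sos_sum {R : Type*} [CommSemiring R] {ι : Type*} (s : Finset ι)
    (f : ι → R) (h : ∀ i ∈ s, IsSumSq (f i)) : IsSumSq (∑ i ∈ s, f i) := by
  classical
  induction s using Finset.induction_on with
  | empty => simpa using IsSumSq.zero
  | insert a s hnot ih =>
    rw [Finset.sum_insert hnot]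
    exact IsSumSq.add (h a (Finset.mem_insert_self a s))
      (ih fun i hi => h i (Finset.mem_insert_of_mem hi))

/-- Multiplication by a nonneg real constant preserves SOS in `MvPolynomial σ ℝ`. -/
theorem sos_C_mul {σ : Type*} {c : ℝ} (hc : 0 ≤ c) {S : MvPolynomial σ ℝ}
    (h : IsSumSq S) : IsSumSq (C c * S) := by
  have : (C c : MvPolynomial σ ℝ) = C (Real.sqrt c) * C (Real.sqrt c) := by
    rw [← C_mul, Real.mul_self_sqrt hc]
  rw [this]; exact sos_sq_mul _ h

noncomputable def Wpoly {A : Type*} [CommRing A] : ℕ → A → A → A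
  | 0, _, _ => 0
  | (m+1), u, v => v * Wpoly m u v + ∑ l ∈ Finset.range (m+1), u ^ l * v ^ (m - l)

theorem pair_id {A : Type*} [CommRing A] (m : ℕ) (u v : A) :
    u ^ (m+1) + (m : A) * v ^ (m+1) = ((m : A) + 1) * (u * v ^ m) + (u - v) ^ 2 * Wpoly m u v := by
  induction m with
  | zero => simp [Wpoly]
  | succ m ih =>
    have g : (∑ l ∈ Finset.range (m+1), u ^ l * v ^ (m - l)) * (u - v)
        = u ^ (m+1) - v ^ (m+1) := by
      simpa using geom_sum₂_mul u v (m+1)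
    rw [Wpoly]
    push_cast
    linear_combination v * ih - (u - v) * g

theorem Wpoly_sos {A : Type*} [CommRing A] (m : ℕ) (x y : A) :
    IsSumSq (Wpoly m (x * x) (y * y)) := by
  induction m with
  | zero => exact IsSumSq.zero
  | succ m ih =>
    rw [Wpoly]
    refine IsSumSq.add (sos_sq_mul y ih) ?_
    refine sos_sum _ _ fun l _ => ?_
    have : (x*x) ^ l * ((y*y) ^ (m - l)) = (x^l * y^(m-l)) * (x^l * y^(m-l)) := by ring
    rw [this]; exact sos_mul_self _




/-- Even-exponent AM-GM is SOS: for `∑ β = d`, `∑ β_k x_k^{2d} - d x^{2β}` is SOS. -/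
theorem amgm_even {σ : Type*} [Fintype σ] [DecidableEq σ] :
    ∀ (d : ℕ), 1 ≤ d → ∀ (β : σ →₀ ℕ), (∑ k, β k) = d →
    ∃ s : MvPolynomial σ ℝ, IsSumSq s ∧
      ∑ k, C (β k : ℝ) * X k ^ (2*d) = C (d : ℝ) * monomial (2 • β) 1 + s := by
  intro d
  induction d with
  | zero => omega
  | succ m ih =>
    intro _ β hβ
    -- find i with β i ≠ 0
    have hex : ∃ i, β i ≠ 0 := by
      by_contra h
      push_neg at h
      simp [h] at hβ
    obtain ⟨i, hi⟩ := hex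
    have hle : Finsupp.single i 1 ≤ β := Finsupp.single_le_iff.mpr (Nat.one_le_iff_ne_zero.mpr hi)
    set β' : σ →₀ ℕ := β - Finsupp.single i 1 with hβ'def
    have hsplit : β' + Finsupp.single i 1 = β := tsub_add_cancel_of_le hle
    have happ : ∀ k, β k = β' k + (Finsupp.single i 1) k := by
      intro k; rw [← hsplit]; simp
    have hsum' : (∑ k, β' k) = m := by
      have h1 : (∑ k, β k) = (∑ k, β' k) + ∑ k, (Finsupp.single i 1) k := by
        rw [Finset.sum_congr rfl fun k _ => happ k, Finset.sum_add_distrib]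
      have h2 : (∑ k, (Finsupp.single i 1) k) = 1 := by
        rw [Finset.sum_congr rfl fun k _ => Finsupp.single_apply]
        simp
      omega
    -- single-exponent sums
    have hsingle_sum : ∀ (N : ℕ), (∑ k, C ((Finsupp.single i 1 : σ →₀ ℕ) k : ℝ) * X k ^ N)
        = (X i ^ N : MvPolynomial σ ℝ) := by
      intro N
      rw [Finset.sum_eq_single i]
      · simp
      · intro k _ hk
        rw [Finsupp.single_apply, if_neg (by exact fun h => hk h.symm)]
        simp
      · simp
    rcases Nat.eq_zero_or_pos m with hm0 | hm1
    · -- base case d = 1 : β = single i 1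
      subst hm0
      have hβ0 : β' = 0 := by
        ext k
        have := Finset.sum_eq_zero_iff.mp hsum' k (Finset.mem_univ k)
        simpa using this
      have hβeq : β = Finsupp.single i 1 := by rw [← hsplit, hβ0, zero_add]
      refine ⟨0, IsSumSq.zero, ?_⟩
      rw [hβeq, hsingle_sum, add_zero]
      have : (2 • Finsupp.single i 1 : σ →₀ ℕ) = Finsupp.single i 2 := by
        rw [Finsupp.smul_single]; norm_num
      rw [this]
      simp [X_pow_eq_monomial]
    · -- inductive step, m ≥ 1
      obtain ⟨s₁, hs₁, eq₁⟩ := ih hm1 β' hsum'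
      -- pair identities
      set q : σ → MvPolynomial σ ℝ :=
        fun k => (X i ^ 2 - X k ^ 2) ^ 2 * Wpoly m (X i ^ 2) (X k ^ 2) with hq
      have pairs : ∀ k, (X i : MvPolynomial σ ℝ) ^ (2*(m+1)) + C (m : ℝ) * X k ^ (2*(m+1))
          = (C (m : ℝ) + 1) * (X i ^ 2 * X k ^ (2*m)) + q k := by
        intro k
        have := pair_id m ((X i : MvPolynomial σ ℝ) ^ 2) (X k ^ 2)
        rw [← pow_mul, ← pow_mul, ← pow_mul] at this
        simpa [hq, C_eq_coe_nat] using this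
      set Q : MvPolynomial σ ℝ := ∑ k, C (β' k : ℝ) * q k with hQ
      set s : MvPolynomial σ ℝ :=
        C ((m:ℝ)⁻¹) * ((C (m:ℝ) + 1) * (X i ^ 2 * s₁) + Q) with hs
      have hm0 : (m : ℝ) ≠ 0 := Nat.cast_ne_zero.mpr (by omega)
      have hCsum : (∑ k, C (β' k : ℝ) : MvPolynomial σ ℝ) = C (m : ℝ) := by
        rw [← map_sum, ← Nat.cast_sum, hsum']
      have h1 : (∑ k, C (β k : ℝ) * X k ^ (2*(m+1)) : MvPolynomial σ ℝ)
          = (∑ k, C (β' k : ℝ) * X k ^ (2*(m+1))) + X i ^ (2*(m+1)) := by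
        rw [← hsingle_sum (2*(m+1)), ← Finset.sum_add_distrib]
        refine Finset.sum_congr rfl fun k _ => ?_
        rw [happ k]
        push_cast
        rw [map_add]
        ring
      have h2 : C (m:ℝ) * X i ^ (2*(m+1))
            + C (m:ℝ) * (∑ k, C (β' k : ℝ) * X k ^ (2*(m+1)))
          = (C (m:ℝ) + 1) * (X i ^ 2 * ∑ k, C (β' k : ℝ) * X k ^ (2*m)) + Q := by
        calc C (m:ℝ) * X i ^ (2*(m+1))
              + C (m:ℝ) * (∑ k, C (β' k : ℝ) * X k ^ (2*(m+1)))
            = (∑ k, C (β' k : ℝ)) * X i ^ (2*(m+1))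
              + ∑ k, C (m:ℝ) * (C (β' k : ℝ) * X k ^ (2*(m+1))) := by
              rw [hCsum, Finset.mul_sum]
          _ = ∑ k, C (β' k : ℝ) * (X i ^ (2*(m+1)) + C (m:ℝ) * X k ^ (2*(m+1))) := by
              rw [Finset.sum_mul, ← Finset.sum_add_distrib]
              exact Finset.sum_congr rfl fun k _ => by ring
          _ = ∑ k, C (β' k : ℝ) * ((C (m:ℝ) + 1) * (X i ^ 2 * X k ^ (2*m)) + q k) :=
              Finset.sum_congr rfl fun k _ => by rw [pairs k]
          _ = ∑ k, ((C (m:ℝ) + 1) * (X i ^ 2 * (C (β' k : ℝ) * X k ^ (2*m)))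
                + C (β' k : ℝ) * q k) := Finset.sum_congr rfl fun k _ => by ring
          _ = (C (m:ℝ) + 1) * (X i ^ 2 * ∑ k, C (β' k : ℝ) * X k ^ (2*m)) + Q := by
              rw [Finset.sum_add_distrib, ← Finset.mul_sum, ← Finset.mul_sum, hQ]
      have h4 : (X i : MvPolynomial σ ℝ) ^ 2 * monomial (2 • β') 1 = monomial (2 • β) 1 := by
        rw [X_pow_eq_monomial, monomial_mul, one_mul]
        congr 1
        rw [← hsplit, smul_add, Finsupp.smul_single, add_comm]
        norm_num
      have h5 : (C (m:ℝ) : MvPolynomial σ ℝ) * C ((m:ℝ)⁻¹) = 1 := by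
        rw [← map_mul, mul_inv_cancel₀ hm0, map_one]
      have h6 : (C (((m:ℕ)+1 : ℕ) : ℝ) : MvPolynomial σ ℝ) = C (m:ℝ) + 1 := by
        push_cast
        rw [map_add, map_one]
      have hCm_ne : (C (m:ℝ) : MvPolynomial σ ℝ) ≠ 0 := by
        rw [Ne, C_eq_zero]; exact hm0
      have hQsos : IsSumSq Q := by
        rw [hQ]
        refine sos_sum _ _ fun k _ => ?_
        refine sos_C_mul (Nat.cast_nonneg _) ?_
        rw [hq]
        simp only []
        rw [pow_two ((X i : MvPolynomial σ ℝ)^2 - X k ^2)]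
        rw [pow_two (X i : MvPolynomial σ ℝ), pow_two (X k : MvPolynomial σ ℝ)]
        exact sos_sq_mul _ (Wpoly_sos m (X i) (X k))
      refine ⟨s, ?_, ?_⟩
      · rw [hs]
        refine sos_C_mul (inv_nonneg.mpr (Nat.cast_nonneg m)) (IsSumSq.add ?_ hQsos)
        have : (C (m:ℝ) + 1 : MvPolynomial σ ℝ) = C ((m:ℝ) + 1) := by
          rw [map_add, map_one]
        rw [this, pow_two (X i : MvPolynomial σ ℝ)]
        exact sos_C_mul (by positivity) (sos_sq_mul _ hs₁)
      · apply mul_left_cancel₀ hCm_ne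
        rw [h6]
        linear_combination (C (m:ℝ) : MvPolynomial σ ℝ) * h1 + h2
          + (C (m:ℝ) + 1) * (X i ^ 2) * eq₁
          + C (m:ℝ) * (C (m:ℝ) + 1) * h4
          - ((C (m:ℝ) + 1) * (X i ^ 2 * s₁) + Q) * h5

theorem exists_half {σ : Type*} [Fintype σ] [DecidableEq σ] :
    ∀ (t : ℕ) (α : σ →₀ ℕ), t ≤ (∑ k, α k) → ∃ β : σ →₀ ℕ, β ≤ α ∧ (∑ k, β k) = t := by
  intro t
  induction t with
  | zero => exact fun α _ => ⟨0, zero_le, by simp⟩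
  | succ t ih =>
    intro α hα
    obtain ⟨β, hβle, hβsum⟩ := ih α (le_trans (Nat.le_succ t) hα)
    have hex : ∃ i, β i < α i := by
      by_contra h
      push_neg at h
      have : ∀ i, β i = α i := fun i => le_antisymm (Finsupp.le_def.mp hβle i) (h i)
      have : (∑ k, β k) = ∑ k, α k := Finset.sum_congr rfl fun k _ => this k
      omega
    obtain ⟨i, hi⟩ := hex
    refine ⟨β + Finsupp.single i 1, ?_, ?_⟩
    · rw [Finsupp.le_def]
      intro j
      rcases eq_or_ne j i with rfl | hne
      · simpa [Finsupp.single_apply] using hi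
      · simpa [Finsupp.single_apply, if_neg (Ne.symm hne)] using Finsupp.le_def.mp hβle j
    · have : (∑ k, (Finsupp.single i 1 : σ →₀ ℕ) k) = 1 := by
        rw [Finset.sum_congr rfl fun k _ => Finsupp.single_apply]
        simp
      simp only [Finsupp.add_apply, Finset.sum_add_distrib, hβsum, this]

/-- Homogeneous AM-GM, both signs: for `∑ α = 2d`,
`∑ α_k x_k^{2d} ∓ 2d x^α` is SOS. -/
theorem amgm_homog {σ : Type*} [Fintype σ] [DecidableEq σ] (d : ℕ) (hd : 1 ≤ d)
    (α : σ →₀ ℕ) (hα : (∑ k, α k) = 2 * d) (ε : ℝ) (hε : ε = 1 ∨ ε = -1) :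
    ∃ s : MvPolynomial σ ℝ, IsSumSq s ∧
      ∑ k, C (α k : ℝ) * X k ^ (2*d)
        = C (ε * ((2*d : ℕ) : ℝ)) * monomial α 1 + s := by
  obtain ⟨β, hβle, hβsum⟩ := exists_half d α (by omega)
  set γ : σ →₀ ℕ := α - β with hγdef
  have hsplit : β + γ = α := by
    rw [hγdef, add_tsub_cancel_of_le hβle]
  have hγsum : (∑ k, γ k) = d := by
    have : (∑ k, α k) = (∑ k, β k) + ∑ k, γ k := by
      rw [← hsplit]; simp [Finsupp.add_apply, Finset.sum_add_distrib]
    omega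
  obtain ⟨sβ, hsβ, eqβ⟩ := amgm_even d hd β hβsum
  obtain ⟨sγ, hsγ, eqγ⟩ := amgm_even d hd γ hγsum
  set p : MvPolynomial σ ℝ := monomial β 1 - C ε * monomial γ 1 with hp
  have hε2 : ε * ε = 1 := by rcases hε with rfl | rfl <;> norm_num
  have hββ : (monomial β 1 : MvPolynomial σ ℝ) * monomial β 1 = monomial (2 • β) 1 := by
    rw [monomial_mul, one_mul, two_smul]
  have hγγ : (monomial γ 1 : MvPolynomial σ ℝ) * monomial γ 1 = monomial (2 • γ) 1 := by
    rw [monomial_mul, one_mul, two_smul]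
  have hβγ : (monomial β 1 : MvPolynomial σ ℝ) * monomial γ 1 = monomial α 1 := by
    rw [monomial_mul, one_mul, hsplit]
  have hsum : ∀ k, (C (α k : ℝ) : MvPolynomial σ ℝ) = C (β k : ℝ) + C (γ k : ℝ) := by
    intro k
    rw [← map_add]
    congr 1
    rw [← Nat.cast_add]
    congr 1
    rw [← hsplit]; simp
  have hC2d : (C (((2*d:ℕ)) : ℝ) : MvPolynomial σ ℝ) = C (d:ℝ) + C (d:ℝ) := by
    rw [← map_add]
    congr 1
    push_cast
    ring
  have hCε2 : (C ε : MvPolynomial σ ℝ) * C ε = 1 := by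
    rw [← map_mul, hε2, map_one]
  refine ⟨sβ + sγ + C (d : ℝ) * (p * p), ?_, ?_⟩
  · exact IsSumSq.add (IsSumSq.add hsβ hsγ) (sos_C_mul (Nat.cast_nonneg d) (sos_mul_self p))
  · have hsum' : (∑ k, C (α k : ℝ) * X k ^ (2*d) : MvPolynomial σ ℝ)
        = (∑ k, C (β k : ℝ) * X k ^ (2*d)) + ∑ k, C (γ k : ℝ) * X k ^ (2*d) := by
      rw [← Finset.sum_add_distrib]
      exact Finset.sum_congr rfl fun k _ => by rw [hsum k]; ring
    rw [hsum', eqβ, eqγ, C_mul, hp]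
    linear_combination (-(C (d:ℝ) : MvPolynomial σ ℝ))*hββ - C (d:ℝ)*C ε*C ε*hγγ
      + 2*C (d:ℝ)*C ε*hβγ - C (d:ℝ)*(monomial (2•γ) 1)*hCε2
      - C ε*(monomial α 1)*hC2d

/-- Inhomogeneous AM-GM, both signs. -/
theorem amgm_inhomog {n : ℕ} (d : ℕ) (hd : 1 ≤ d) (α : Fin n →₀ ℕ)
    (hα : (∑ i, α i) ≤ 2*d) (ε : ℝ) (hε : ε = 1 ∨ ε = -1) :
    ∃ s : MvPolynomial (Fin n) ℝ, IsSumSq s ∧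
      C (((2*d - ∑ i, α i : ℕ)) : ℝ) + ∑ k, C (α k : ℝ) * X k ^ (2*d)
        = C (ε * ((2*d:ℕ):ℝ)) * monomial α 1 + s := by
  classical
  set c : ℕ := 2*d - ∑ i, α i with hc
  set emb : Fin n ↪ Option (Fin n) := Function.Embedding.some with hemb
  set αfull : Option (Fin n) →₀ ℕ := Finsupp.embDomain emb α + Finsupp.single none c
    with hαfull
  have happ_some : ∀ i, αfull (some i) = α i := by
    intro i
    rw [hαfull, Finsupp.add_apply]
    rw [show (some i) = emb i from rfl, Finsupp.embDomain_apply_self]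
    have h2 : (Finsupp.single (none : Option (Fin n)) c) (emb i) = 0 := by
      rw [Finsupp.single_apply, if_neg (by simp [hemb])]
    rw [h2, add_zero]
  have happ_none : αfull none = c := by
    rw [hαfull, Finsupp.add_apply]
    have h1 : Finsupp.embDomain emb α none = 0 := by
      apply Finsupp.embDomain_notin_range
      simp [hemb]
    rw [h1, Finsupp.single_apply, if_pos rfl, zero_add]
  have hsum : (∑ k, αfull k) = 2*d := by
    rw [Fintype.sum_option]
    rw [Finset.sum_congr rfl fun i _ => happ_some i]
    rw [happ_none, hc]
    exact Nat.sub_add_cancel hα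
  obtain ⟨s, hs, eq⟩ := amgm_homog d hd αfull hsum ε hε
  set g : Option (Fin n) → MvPolynomial (Fin n) ℝ := fun o => Option.elim o 1 (fun i => X i)
    with hg
  have heq2 := congrArg (aeval (R := ℝ) g) eq
  rw [map_add, map_sum, map_mul] at heq2
  have hC : ∀ r : ℝ, aeval (R := ℝ) g (C r) = (C r : MvPolynomial (Fin n) ℝ) := fun r => by
    rw [aeval_C]; rfl
  have hterm : ∀ k, aeval (R := ℝ) g (C (αfull k : ℝ) * X k ^ (2*d))
      = C (αfull k : ℝ) * (g k) ^ (2*d) := by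
    intro k
    rw [map_mul, map_pow, aeval_X, hC]
  rw [Finset.sum_congr rfl fun k _ => hterm k] at heq2
  rw [Fintype.sum_option, happ_none] at heq2
  have hgnone : g none = 1 := rfl
  have hgsome : ∀ i, g (some i) = X i := fun i => rfl
  rw [hgnone, one_pow, mul_one] at heq2
  rw [Finset.sum_congr rfl fun i _ => by rw [happ_some i, hgsome i]] at heq2
  have hmon : aeval (R := ℝ) g (monomial αfull 1) = (monomial α 1 : MvPolynomial (Fin n) ℝ) := by
    rw [aeval_monomial, map_one, one_mul, hαfull]
    rw [Finsupp.prod_add_index' (fun a => pow_zero _) (fun a b₁ b₂ => pow_add _ _ _),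
      Finsupp.prod_embDomain]
    have hone : ((Finsupp.single (none : Option (Fin n)) c).prod
        fun (a : Option (Fin n)) (k : ℕ) => g a ^ k) = 1 := by
      rw [Finsupp.prod_single_index (h := fun (a : Option (Fin n)) (k : ℕ) => g a ^ k)
        (pow_zero _), hgnone, one_pow]
    rw [hone, mul_one, monomial_eq, C_1, one_mul]
    exact Finsupp.prod_congr fun i _ => by rw [show emb i = some i from rfl, hgsome i]
  rw [hC] at heq2
  refine ⟨aeval (R := ℝ) g s, sos_map ((aeval (R := ℝ) g : MvPolynomial (Option (Fin n)) ℝ →ₐ[ℝ]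
    MvPolynomial (Fin n) ℝ) : MvPolynomial (Option (Fin n)) ℝ →+* MvPolynomial (Fin n) ℝ) hs, ?_⟩
  linear_combination heq2 + (C (ε * ((2*d:ℕ):ℝ)) : MvPolynomial (Fin n) ℝ) * hmon

/-- Lasserre's SOS criterion: let `f` have degree `2d`, constant term `f_0`,
coefficient `f_{2d,i}` of `X_i^{2d}`, and let `Δ` be the set of exponents
`α ∉ {0, 2d·e_1,…,2d·e_n}` with `f_α ≠ 0` and `f_α X^α` not a square.  If
`f_0 ≥ Σ_{α∈Δ} |f_α|(2d−|α|)/(2d)` and `f_{2d,i} ≥ Σ_{α∈Δ} |f_α| α_i/(2d)`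
for each `i`, then `f` is a sum of squares. -/
theorem lasserre_sos {n d : ℕ} (hd : 1 ≤ d) (f : MvPolynomial (Fin n) ℝ)
    (hdeg : f.totalDegree = 2 * d) (Δ : Finset (Fin n →₀ ℕ))
    (hΔ : ∀ α, α ∈ Δ ↔ α ∈ f.support ∧ α ≠ 0 ∧
      (¬ ∃ i, α = Finsupp.single i (2 * d)) ∧
      (f.coeff α < 0 ∨ ∃ i, Odd (α i)))
    (hL1 : ∑ α ∈ Δ, |f.coeff α| * ((2 * d - ∑ i, α i : ℕ) : ℝ) / ((2 * d : ℕ) : ℝ)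
      ≤ f.coeff 0)
    (hL2 : ∀ i, ∑ α ∈ Δ, |f.coeff α| * ((α i : ℕ) : ℝ) / ((2 * d : ℕ) : ℝ)
      ≤ f.coeff (Finsupp.single i (2 * d))) :
    IsSumSq f := by
  classical
  set D : ℝ := ((2 * d : ℕ) : ℝ) with hDdef
  have hD0 : D ≠ 0 := Nat.cast_ne_zero.mpr (by omega)
  have hDnn : (0:ℝ) ≤ D := Nat.cast_nonneg _
  -- weights
  set w0 : (Fin n →₀ ℕ) → ℝ := fun α => |f.coeff α| * ((2 * d - ∑ i, α i : ℕ) : ℝ) / D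
    with hw0def
  set w : (Fin n →₀ ℕ) → Fin n → ℝ := fun α k => |f.coeff α| * ((α k : ℕ) : ℝ) / D
    with hwdef
  -- degree bound
  have hdegle : ∀ α ∈ f.support, (∑ i, α i) ≤ 2 * d := by
    intro α hα
    have h1 : (α.sum fun _ e => e) ≤ f.totalDegree := le_totalDegree hα
    have h2 : (α.sum fun _ e => e) = ∑ i, α i := Finsupp.sum_fintype _ _ fun _ => rfl
    omega
  -- key SOS fact for exponents in Δ
  have key : ∀ α ∈ Δ, ∃ s : MvPolynomial (Fin n) ℝ, IsSumSq s ∧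
      monomial α (f.coeff α) + C (w0 α) + ∑ k, C (w α k) * X k ^ (2*d) = s := by
    intro α hαΔ
    have hsupp : α ∈ f.support := ((hΔ α).mp hαΔ).1
    have hne : f.coeff α ≠ 0 := mem_support_iff.mp hsupp
    have habs : |f.coeff α| ≠ 0 := abs_ne_zero.mpr hne
    set ε : ℝ := -(f.coeff α) / |f.coeff α| with hεdef
    have hε : ε = 1 ∨ ε = -1 := by
      rcases lt_or_gt_of_ne hne with h | h
      · left; rw [hεdef, abs_of_neg h]; field_simp
      · right; rw [hεdef, abs_of_pos h]; field_simp
    obtain ⟨s, hs, eq⟩ := amgm_inhomog d hd α (hdegle α hsupp) ε hε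
    refine ⟨C (|f.coeff α| / D) * s,
      sos_C_mul (div_nonneg (abs_nonneg _) hDnn) hs, ?_⟩
    have hcoef : (C (|f.coeff α| / D) : MvPolynomial (Fin n) ℝ) * C (ε * D)
        = C (-(f.coeff α)) := by
      rw [← map_mul]
      congr 1
      rw [hεdef]
      field_simp
    have hmono : (C (-(f.coeff α)) : MvPolynomial (Fin n) ℝ) * monomial α 1
        = -(monomial α (f.coeff α)) := by
      rw [C_mul_monomial, mul_one, ← map_neg]
    have hC0 : (C (|f.coeff α| / D) : MvPolynomial (Fin n) ℝ)
        * C (((2 * d - ∑ i, α i : ℕ)) : ℝ) = C (w0 α) := by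
      rw [← map_mul]
      congr 1
      rw [hw0def]
      ring
    have hsum : (C (|f.coeff α| / D) : MvPolynomial (Fin n) ℝ)
        * (∑ k, C ((α k : ℕ) : ℝ) * X k ^ (2*d)) = ∑ k, C (w α k) * X k ^ (2*d) := by
      rw [Finset.mul_sum]
      refine Finset.sum_congr rfl fun k _ => ?_
      rw [← mul_assoc, ← map_mul]
      congr 2
      rw [hwdef]
      ring
    linear_combination (C (|f.coeff α| / D) : MvPolynomial (Fin n) ℝ) * eq
      - hC0 - hsum + (monomial α 1) * hcoef + hmono
  -- square fact for remaining exponents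
  set T : Finset (Fin n →₀ ℕ) := Finset.image (fun i => Finsupp.single i (2*d)) Finset.univ
    with hTdef
  set E : Finset (Fin n →₀ ℕ) := f.support \ (Δ ∪ ({0} ∪ T)) with hEdef
  have keyE : ∀ α ∈ E, ∃ p : MvPolynomial (Fin n) ℝ, monomial α (f.coeff α) = p * p := by
    intro α hαE
    rw [hEdef, Finset.mem_sdiff] at hαE
    obtain ⟨hsupp, hnot⟩ := hαE
    simp only [Finset.mem_union, Finset.mem_singleton, hTdef, Finset.mem_image,
      Finset.mem_univ, true_and, not_or, not_exists] at hnot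
    obtain ⟨hnΔ, hn0, hnT⟩ := hnot
    have hne : f.coeff α ≠ 0 := mem_support_iff.mp hsupp
    have hcond : ¬ (f.coeff α < 0 ∨ ∃ i, Odd (α i)) := by
      intro hc
      exact hnΔ ((hΔ α).mpr ⟨hsupp, hn0, fun ⟨i, hi⟩ => hnT i hi.symm, hc⟩)
    push_neg at hcond
    obtain ⟨hge, heven⟩ := hcond
    have hpos : 0 < f.coeff α := lt_of_le_of_ne hge (Ne.symm hne)
    set β : Fin n →₀ ℕ := α.mapRange (· / 2) (Nat.zero_div 2) with hβdef
    have hββ : β + β = α := by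
      ext i
      have he : ¬ Odd (α i) := fun h => (heven i) h
      rw [Nat.not_odd_iff_even] at he
      obtain ⟨k, hk⟩ := he
      simp only [hβdef, Finsupp.add_apply, Finsupp.mapRange_apply]
      omega
    refine ⟨monomial β (Real.sqrt (f.coeff α)), ?_⟩
    rw [monomial_mul, hββ, Real.mul_self_sqrt hpos.le]
  -- decomposition of f
  have hTne : (2*d) ≠ 0 := by omega
  set V : Finset (Fin n →₀ ℕ) := f.support ∪ ({0} ∪ T) with hVdef
  have hfV : f = ∑ α ∈ V, monomial α (f.coeff α) := by
    conv_lhs => rw [f.as_sum]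
    refine Finset.sum_subset Finset.subset_union_left fun x hx hnx => ?_
    rw [notMem_support_iff.mp hnx, map_zero]
  have hVeq : V = (Δ ∪ E) ∪ ({0} ∪ T) := by
    rw [hVdef, hEdef]
    ext α
    simp only [Finset.mem_union, Finset.mem_sdiff, Finset.mem_union]
    by_cases hΔ' : α ∈ Δ
    · constructor
      · intro _; exact Or.inl (Or.inl hΔ')
      · intro _; exact Or.inl ((hΔ α).mp hΔ').1
    · tauto
  have hdisj1 : Disjoint (Δ ∪ E) ({0} ∪ T) := by
    rw [Finset.disjoint_left]
    intro α hα hα0T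
    rcases Finset.mem_union.mp hα with h | h
    · obtain ⟨_, hn0, hnT, _⟩ := (hΔ α).mp h
      rcases Finset.mem_union.mp hα0T with h0 | hT
      · exact hn0 (Finset.mem_singleton.mp h0)
      · obtain ⟨i, _, hi⟩ := Finset.mem_image.mp hT
        exact hnT ⟨i, hi.symm⟩
    · rw [hEdef, Finset.mem_sdiff] at h
      exact h.2 (Finset.mem_union_right _ hα0T)
  have hdisj2 : Disjoint Δ E := by
    rw [Finset.disjoint_left]
    intro α hα hαE
    rw [hEdef, Finset.mem_sdiff] at hαE
    exact hαE.2 (Finset.mem_union_left _ hα)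
  have hdisj3 : Disjoint ({0} : Finset (Fin n →₀ ℕ)) T := by
    rw [Finset.disjoint_left]
    intro α hα hαT
    rw [Finset.mem_singleton] at hα
    obtain ⟨i, _, hi⟩ := Finset.mem_image.mp hαT
    rw [hα] at hi
    exact hTne (by simpa using Finsupp.single_eq_zero.mp hi)
  have hdecomp : f = (∑ α ∈ Δ, monomial α (f.coeff α)) + (∑ α ∈ E, monomial α (f.coeff α))
      + (monomial 0 (f.coeff 0)
        + ∑ i, monomial (Finsupp.single i (2*d)) (f.coeff (Finsupp.single i (2*d)))) := by
    have hT : (∑ α ∈ T, monomial α (f.coeff α))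
        = ∑ i, monomial (Finsupp.single i (2*d)) (f.coeff (Finsupp.single i (2*d))) := by
      rw [hTdef]
      exact Finset.sum_image fun i _ j _ h => Finsupp.single_left_injective hTne h
    calc f = ∑ α ∈ V, monomial α (f.coeff α) := hfV
      _ = (∑ α ∈ (Δ ∪ E), monomial α (f.coeff α))
          + ∑ α ∈ ({0} ∪ T), monomial α (f.coeff α) := by
          rw [hVeq, Finset.sum_union hdisj1]
      _ = _ := by
          rw [Finset.sum_union hdisj2, Finset.sum_union hdisj3, Finset.sum_singleton, hT]
  set r0 : ℝ := f.coeff 0 - ∑ α ∈ Δ, w0 α with hr0def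
  set rX : Fin n → ℝ := fun i => f.coeff (Finsupp.single i (2*d)) - ∑ α ∈ Δ, w α i with hrXdef
  have hr0nn : (0:ℝ) ≤ r0 := sub_nonneg.mpr hL1
  have hrXnn : ∀ i, (0:ℝ) ≤ rX i := fun i => sub_nonneg.mpr (hL2 i)
  have hA : (∑ α ∈ Δ, (monomial α (f.coeff α) + C (w0 α) + ∑ k, C (w α k) * X k ^ (2*d)))
      = (∑ α ∈ Δ, monomial α (f.coeff α)) + C (∑ α ∈ Δ, w0 α)
        + ∑ k, C (∑ α ∈ Δ, w α k) * X k ^ (2*d) := by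
    rw [Finset.sum_add_distrib, Finset.sum_add_distrib, map_sum]
    congr 1
    rw [Finset.sum_comm]
    refine Finset.sum_congr rfl fun k _ => ?_
    rw [map_sum, Finset.sum_mul]
  have hr0C : (C r0 : MvPolynomial (Fin n) ℝ) + C (∑ α ∈ Δ, w0 α) = monomial 0 (f.coeff 0) := by
    rw [← map_add, hr0def, sub_add_cancel, monomial_zero']
  have hXsum : (∑ i, C (rX i) * X i ^ (2*d)) + (∑ k, C (∑ α ∈ Δ, w α k) * X k ^ (2*d))
      = ∑ i, monomial (Finsupp.single i (2*d)) (f.coeff (Finsupp.single i (2*d))) := by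
    rw [← Finset.sum_add_distrib]
    refine Finset.sum_congr rfl fun i _ => ?_
    rw [← add_mul, ← map_add, hrXdef, sub_add_cancel, C_mul_X_pow_eq_monomial]
  have EQ : f = C r0 + (∑ i, C (rX i) * X i ^ (2*d))
      + (∑ α ∈ Δ, (monomial α (f.coeff α) + C (w0 α) + ∑ k, C (w α k) * X k ^ (2*d)))
      + ∑ α ∈ E, monomial α (f.coeff α) := by
    linear_combination hdecomp - hA - hr0C - hXsum
  rw [EQ]
  refine IsSumSq.add (IsSumSq.add (IsSumSq.add ?_ ?_) ?_) ?_
  · rw [← mul_one (C r0 : MvPolynomial (Fin n) ℝ)]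
    exact sos_C_mul hr0nn (by simpa using sos_mul_self (1 : MvPolynomial (Fin n) ℝ))
  · refine sos_sum _ _ fun i _ => ?_
    rw [two_mul, pow_add]
    exact sos_C_mul (hrXnn i) (sos_mul_self _)
  · refine sos_sum _ _ fun α hα => ?_
    obtain ⟨s, hs, eqs⟩ := key α hα
    rw [eqs]
    exact hs
  · refine sos_sum _ _ fun α hα => ?_
    obtain ⟨p, hp⟩ := keyE α hα
    rw [hp]
    exact sos_mul_self p
end
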